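/- arXiv:2205.12377 — 8 statements merged into one kernel-verified Lean document; each statement's English description precedes it below -/
import Mathlib

section
/- Let a, b, c, d be unit vectors in Euclidean space ℝ³ and let t be a real number with 0 ≤ t ≤ 1/5. If |⟨a,b⟩| ≤ t, |⟨b,c⟩| ≤ t, |⟨c,a⟩| ≤ t, |⟨b,d⟩| ≤ t and |⟨c,d⟩| ≤ t, then |⟨a,d⟩| ≥ 1 − 5t². -/
open scoped RealInnerProductSpace

set_option maxHeartbeats 1000000 in
theorem stmt_0 (a b c d : EuclideanSpace ℝ (Fin 3)) (t : ℝ)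
    (ha : ‖a‖ = 1) (hb : ‖b‖ = 1) (hc : ‖c‖ = 1) (hd : ‖d‖ = 1)
    (ht0 : 0 ≤ t) (ht1 : t ≤ 1 / 5)
    (hab : |⟪a, b⟫| ≤ t) (hbc : |⟪b, c⟫| ≤ t) (hca : |⟪c, a⟫| ≤ t)
    (hbd : |⟪b, d⟫| ≤ t) (hcd : |⟪c, d⟫| ≤ t) :
    1 - 5 * t ^ 2 ≤ |⟪a, d⟫| := by
  set v : Fin 4 → EuclideanSpace ℝ (Fin 3) := ![a,b,c,d] with hv
  have hnli : ¬ LinearIndependent ℝ v := by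
    intro h
    have h2 := h.fintype_card_le_finrank
    simp [finrank_euclideanSpace] at h2
  obtain ⟨g, hg, i, hgi⟩ := Fintype.not_linearIndependent_iff.mp hnli
  set M : Matrix (Fin 4) (Fin 4) ℝ := Matrix.of fun i j => ⟪v i, v j⟫ with hM
  have hMv : M.mulVec g = 0 := by
    funext k
    simp only [Matrix.mulVec, dotProduct, hM, Matrix.of_apply]
    rw [show (0:Fin 4 → ℝ) k = 0 from rfl]
    calc ∑ j, ⟪v k, v j⟫ * g j = ⟪v k, ∑ j, g j • v j⟫ := by
          rw [inner_sum]; congr 1; ext j; rw [real_inner_smul_right]; ring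
      _ = 0 := by rw [hg, inner_zero_right]
  have hgne : g ≠ 0 := fun h => hgi (by rw [h]; rfl)
  have hdet0 : M.det = 0 := Matrix.exists_mulVec_eq_zero_iff.mp ⟨g, hgne, hMv⟩
  set p : ℝ := ⟪a, b⟫ with hp'
  set q : ℝ := ⟪a, c⟫ with hq'
  set r : ℝ := ⟪b, c⟫ with hr'
  set s : ℝ := ⟪b, d⟫ with hs'
  set u : ℝ := ⟪c, d⟫ with hu'
  set x : ℝ := ⟪a, d⟫ with hx'
  have hqa : |q| ≤ t := by rw [hq', real_inner_comm]; exact hca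
  have haa : ⟪a, a⟫ = (1:ℝ) := by rw [real_inner_self_eq_norm_sq, ha]; norm_num
  have hbb : ⟪b, b⟫ = (1:ℝ) := by rw [real_inner_self_eq_norm_sq, hb]; norm_num
  have hcc : ⟪c, c⟫ = (1:ℝ) := by rw [real_inner_self_eq_norm_sq, hc]; norm_num
  have hdd : ⟪d, d⟫ = (1:ℝ) := by rw [real_inner_self_eq_norm_sq, hd]; norm_num
  have hMN : M = !![1,p,q,x; p,1,r,s; q,r,1,u; x,s,u,1] := by
    ext i j
    fin_cases i <;> fin_cases j <;>
      simp only [hM, hv, Matrix.of_apply, Matrix.cons_val', Matrix.cons_val_zero,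
        Matrix.cons_val_one, Matrix.head_cons, Matrix.cons_val_two, Matrix.tail_cons,
        Matrix.cons_val_three, Matrix.head_fin_const, Matrix.empty_val',
        Matrix.cons_val_fin_one, Matrix.cons_val_succ, Fin.mk_zero, Fin.mk_one] <;>
      first
        | exact haa | exact hbb | exact hcc | exact hdd
        | exact hp'.symm | exact hq'.symm | exact hr'.symm | exact hs'.symm
        | exact hu'.symm | exact hx'.symm
        | exact (real_inner_comm _ _).trans hp'.symm
        | exact (real_inner_comm _ _).trans hq'.symm
        | exact (real_inner_comm _ _).trans hr'.symm
        | exact (real_inner_comm _ _).trans hs'.symm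
        | exact (real_inner_comm _ _).trans hu'.symm
        | exact (real_inner_comm _ _).trans hx'.symm
  have hdet : 1 - x^2 - u^2 - s^2 - r^2 - q^2 - p^2 + 2*r*s*u + r^2*x^2 + 2*q*u*x
      - 2*q*r*s*x + q^2*s^2 + 2*p*s*x - 2*p*r*u*x - 2*p*q*s*u + 2*p*q*r + p^2*u^2 = 0 := by
    rw [← hdet0, hMN, Matrix.det_succ_row_zero]
    simp [Fin.sum_univ_succ, Matrix.det_fin_three, Matrix.submatrix_apply, Fin.succAbove]
    ring
  -- bounds as squares
  have sq_of_abs : ∀ y : ℝ, |y| ≤ t → y^2 ≤ t^2 := by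
    intro y hy
    have h := pow_le_pow_left₀ (abs_nonneg y) hy 2
    rwa [sq_abs] at h
  have hp2 : p^2 ≤ t^2 := sq_of_abs p hab
  have hq2 : q^2 ≤ t^2 := sq_of_abs q hqa
  have hr2 : r^2 ≤ t^2 := sq_of_abs r hbc
  have hs2 : s^2 ≤ t^2 := sq_of_abs s hbd
  have hu2 : u^2 ≤ t^2 := sq_of_abs u hcd
  have ht3 : t^3 ≤ t^2 * (1/5) := by
    calc t^3 = t^2 * t := by ring
    _ ≤ t^2 * (1/5) := mul_le_mul_of_nonneg_left ht1 (sq_nonneg t)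
  set B : ℝ := 2*(q*u + p*s) - 2*r*(q*s + p*u) with hB
  set P : ℝ := 1 - r^2 - p^2 - q^2 + 2*p*q*r with hP
  set Q : ℝ := 1 - r^2 - s^2 - u^2 + 2*r*s*u with hQ
  set A1 : ℝ := 1 - r^2 - 2*t^2 - 2*t^3 with hA1
  have hid : (x*(1-r^2) - B/2)^2 = P*Q := by
    have h3 : (1-r^2) * (1 - x^2 - u^2 - s^2 - r^2 - q^2 - p^2 + 2*r*s*u + r^2*x^2 + 2*q*u*x
      - 2*q*r*s*x + q^2*s^2 + 2*p*s*x - 2*p*r*u*x - 2*p*q*s*u + 2*p*q*r + p^2*u^2)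
      = P*Q - (x*(1-r^2) - B/2)^2 := by rw [hP, hQ, hB]; ring
    rw [hdet, mul_zero] at h3; linarith
  have ht25 : t^2 ≤ 1/25 := by
    calc t^2 = t*t := sq t
      _ ≤ 1/5*(1/5) := mul_le_mul ht1 ht1 ht0 (by norm_num)
      _ = 1/25 := by norm_num
  have hA1nn : 0 ≤ A1 := by rw [hA1]; linarith
  have abs3 : ∀ y z w : ℝ, |y| ≤ t → |z| ≤ t → |w| ≤ t → |y*z*w| ≤ t^3 := by
    intro y z w hy hz hw
    have h1 : |y*z*w| = |y| * |z| * |w| := by rw [abs_mul, abs_mul]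
    have h2 : |y| * |z| * |w| ≤ t*t*t :=
      mul_le_mul (mul_le_mul hy hz (abs_nonneg z) ht0) hw (abs_nonneg w)
        (mul_nonneg ht0 ht0)
    calc |y*z*w| = |y| * |z| * |w| := h1
      _ ≤ t*t*t := h2
      _ = t^3 := by ring
  have habs_pqr := abs3 p q r hab hqa hbc
  have habs_rsu := abs3 r s u hbc hbd hcd
  have hPA : A1 ≤ P := by
    rw [hA1, hP]
    have h := abs_le.mp habs_pqr
    linarith [h.1, h.2, hp2, hq2]
  have hQA : A1 ≤ Q := by
    rw [hA1, hQ]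
    have h := abs_le.mp habs_rsu
    linarith [h.1, h.2, hs2, hu2]
  have hQnn : 0 ≤ Q := le_trans hA1nn hQA
  have hPQ : A1^2 ≤ P*Q := by
    calc A1^2 = A1*A1 := sq A1
      _ ≤ A1*Q := mul_le_mul_of_nonneg_left hQA hA1nn
      _ ≤ P*Q := mul_le_mul_of_nonneg_right hPA hQnn
  have habs2 : ∀ y z w e : ℝ, |y| ≤ t → |z| ≤ t → |w| ≤ t → |e| ≤ t →
      |y*z + w*e| ≤ 2*t^2 := by
    intro y z w e hy hz hw he
    calc |y*z + w*e| ≤ |y*z| + |w*e| := abs_add_le _ _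
      _ = |y| * |z| + |w| * |e| := by rw [abs_mul, abs_mul]
      _ ≤ t*t + t*t := by gcongr <;> first | exact abs_nonneg _ | assumption
      _ = 2*t^2 := by ring
  have hBb : |B| ≤ 4*t^2 + 4*t^3 := by
    rw [hB]
    have h2 := habs2 q u p s hqa hcd hab hbd
    have h3 := habs2 q s p u hqa hbd hab hcd
    have h4 : |r| * |q*s + p*u| ≤ t * (2*t^2) :=
      mul_le_mul hbc h3 (abs_nonneg _) ht0
    calc |2*(q*u + p*s) - 2*r*(q*s + p*u)|
        ≤ |2*(q*u + p*s)| + |2*r*(q*s + p*u)| := abs_sub _ _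
      _ = 2 * |q*u + p*s| + 2*(|r| * |q*s + p*u|) := by
          rw [abs_mul, abs_mul, abs_mul]; simp; ring
      _ ≤ 2*(2*t^2) + 2*(t*(2*t^2)) := by linarith [h2, h4]
      _ = 4*t^2 + 4*t^3 := by ring
  have hxB : A1 ≤ |x*(1-r^2) - B/2| := by
    rw [← Real.sqrt_sq hA1nn, ← Real.sqrt_sq_eq_abs]
    exact Real.sqrt_le_sqrt (by rw [hid]; exact hPQ)
  have hr1 : (0:ℝ) < 1 - r^2 := by linarith
  have hxlb : A1 - |B|/2 ≤ |x| * (1 - r^2) := by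
    have h1 : |x*(1-r^2) - B/2| ≤ |x*(1-r^2)| + |B|/2 := by
      calc |x*(1-r^2) - B/2| ≤ |x*(1-r^2)| + |B/2| := abs_sub _ _
        _ = |x*(1-r^2)| + |B|/2 := by rw [abs_div]; norm_num
    have h2 : |x*(1-r^2)| = |x| * (1-r^2) := by rw [abs_mul, abs_of_pos hr1]
    linarith
  have hfin : (1 - 5*t^2) * (1 - r^2) ≤ |x| * (1 - r^2) := by
    have h5 : (1 - 5*t^2) * (1 - r^2) ≤ A1 - (2*t^2 + 2*t^3) := by
      rw [hA1]
      have e1 : t^2*r^2 ≤ t^2*t^2 := mul_le_mul_of_nonneg_left hr2 (sq_nonneg t)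
      have e2 : t^2*t^2 ≤ t^2*(1/25) := mul_le_mul_of_nonneg_left ht25 (sq_nonneg t)
      linarith [e1, e2, ht3]
    linarith
  have hfin2 := le_of_mul_le_mul_right hfin hr1
  linarith
end

section
/- Let D, T, u, ℓ be unit vectors in Euclidean space ℝ³ and let ε ≥ 0. If |⟨D,T⟩| ≤ ε, |⟨D,ℓ⟩| ≤ ε, |⟨u,T⟩| ≤ ε, |⟨u,ℓ⟩| ≤ ε, and |⟨T,ℓ⟩| ≤ 0.98, then |⟨D,u⟩| ≥ 1 − 202·ε². -/
open scoped RealInnerProductSpace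

lemma gram4_det_zero (v : Fin 4 → EuclideanSpace ℝ (Fin 3)) :
    (Matrix.of fun j k => ⟪v j, v k⟫).det = 0 := by
  set A : Matrix (Fin 3) (Fin 4) ℝ := Matrix.of fun i j => v j i with hA
  have hG : (Matrix.of fun j k => ⟪v j, v k⟫) = A.transpose * A := by
    ext j k
    simp [Matrix.mul_apply, hA, PiLp.inner_apply, RCLike.inner_apply]
    exact Finset.sum_congr rfl (fun _ _ => mul_comm _ _)
  by_contra h
  have hUnit : IsUnit (Matrix.of fun j k => ⟪v j, v k⟫).det := isUnit_iff_ne_zero.mpr h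
  have hrank : (Matrix.of fun j k => ⟪v j, v k⟫).rank = 4 := by
    have := Matrix.rank_of_isUnit (Matrix.of fun j k => ⟪v j, v k⟫)
      ((Matrix.isUnit_iff_isUnit_det _).mpr hUnit)
    simpa using this
  have hle : (Matrix.of fun j k => ⟪v j, v k⟫).rank ≤ 3 := by
    rw [hG]
    exact le_trans (Matrix.rank_mul_le_right A.transpose A)
      (by simpa using Matrix.rank_le_card_height A)
  omega

set_option maxHeartbeats 800000 in
lemma det4_expand (a b c d t x : ℝ) :
    (!![1,a,b,x; a,1,t,c; b,t,1,d; x,c,d,1]).det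
      = (1 - t^2) * (1 - x^2) - (a^2 + b^2 + c^2 + d^2) + 2*a*b*t + 2*c*d*t
        + 2*x*(a*c + b*d) - 2*t*x*(a*d + b*c) + (a*d - b*c)^2 := by
  simp [Matrix.det_succ_row_zero, Fin.sum_univ_succ, Fin.succAbove]
  ring

set_option maxHeartbeats 2000000 in
theorem stmt_5 (D T u ℓ : EuclideanSpace ℝ (Fin 3)) (ε : ℝ) (hε : 0 ≤ ε)
    (hD : ‖D‖ = 1) (hT : ‖T‖ = 1) (hu : ‖u‖ = 1) (hℓ : ‖ℓ‖ = 1)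
    (hDT : |⟪D, T⟫| ≤ ε) (hDℓ : |⟪D, ℓ⟫| ≤ ε)
    (huT : |⟪u, T⟫| ≤ ε) (huℓ : |⟪u, ℓ⟫| ≤ ε)
    (hTℓ : |⟪T, ℓ⟫| ≤ 0.98) :
    1 - 202 * ε ^ 2 ≤ |⟪D, u⟫| := by
  have h0 := gram4_det_zero ![D, T, ℓ, u]
  set a := ⟪D, T⟫ with ha
  set b := ⟪D, ℓ⟫ with hb
  set c := ⟪u, T⟫ with hc
  set d := ⟪u, ℓ⟫ with hd
  set t := ⟪T, ℓ⟫ with ht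
  set x := ⟪D, u⟫ with hx
  have hDD : ⟪D, D⟫ = 1 := by rw [real_inner_self_eq_norm_sq, hD]; norm_num
  have hTT : ⟪T, T⟫ = 1 := by rw [real_inner_self_eq_norm_sq, hT]; norm_num
  have hll : ⟪ℓ, ℓ⟫ = 1 := by rw [real_inner_self_eq_norm_sq, hℓ]; norm_num
  have huu : ⟪u, u⟫ = 1 := by rw [real_inner_self_eq_norm_sq, hu]; norm_num
  have hTD : ⟪T, D⟫ = a := (real_inner_comm T D).symm
  have hlD : ⟪ℓ, D⟫ = b := (real_inner_comm ℓ D).symm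
  have hTu : ⟪T, u⟫ = c := (real_inner_comm T u).symm
  have hlu : ⟪ℓ, u⟫ = d := (real_inner_comm ℓ u).symm
  have hlT : ⟪ℓ, T⟫ = t := (real_inner_comm ℓ T).symm
  have huD : ⟪u, D⟫ = x := (real_inner_comm u D).symm
  have hGmat : (Matrix.of fun j k => ⟪(![D, T, ℓ, u]) j, (![D, T, ℓ, u]) k⟫)
      = !![1,a,b,x; a,1,t,c; b,t,1,d; x,c,d,1] := by
    have key : ∀ (y z : EuclideanSpace ℝ (Fin 3)), ∑ i, y i * z i = ⟪y, z⟫ := by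
      intro y z
      rw [PiLp.inner_apply]
      simp [RCLike.inner_apply]
      exact Finset.sum_congr rfl (fun _ _ => mul_comm _ _)
    ext j k
    fin_cases j <;> fin_cases k <;> simp [hD, hT, hu, hℓ] <;>
      first
        | exact hDD | exact hTT | exact hll | exact huu
        | exact hTD | exact hlD | exact hTu | exact hlu
        | exact hlT | exact huD | rfl
  rw [hGmat, det4_expand] at h0
  -- bounds
  have hx1 : |x| ≤ 1 := by
    have := abs_real_inner_le_norm D u
    rwa [hD, hu, one_mul] at this
  have ht2 : t ^ 2 ≤ 0.9604 := by
    have := abs_le.mp hTℓ; nlinarith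
  have ha2 : a ^ 2 ≤ ε ^ 2 := by have := abs_le.mp hDT; nlinarith
  have hb2 : b ^ 2 ≤ ε ^ 2 := by have := abs_le.mp hDℓ; nlinarith
  have hc2 : c ^ 2 ≤ ε ^ 2 := by have := abs_le.mp huT; nlinarith
  have hd2 : d ^ 2 ≤ ε ^ 2 := by have := abs_le.mp huℓ; nlinarith
  have habs : ∀ y z : ℝ, |y| ≤ ε → |z| ≤ ε → |y * z| ≤ ε ^ 2 := by
    intro y z hy hz
    rw [abs_mul, sq]
    exact mul_le_mul hy hz (abs_nonneg z) hε
  have h1 : |a * b * t| ≤ 0.98 * ε ^ 2 := by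
    rw [abs_mul]
    calc |a*b| * |t| ≤ ε^2 * 0.98 :=
          mul_le_mul (habs a b hDT hDℓ) hTℓ (abs_nonneg t) (by positivity)
      _ = 0.98 * ε^2 := by ring
  have h2 : |c * d * t| ≤ 0.98 * ε ^ 2 := by
    rw [abs_mul]
    calc |c*d| * |t| ≤ ε^2 * 0.98 :=
          mul_le_mul (habs c d huT huℓ) hTℓ (abs_nonneg t) (by positivity)
      _ = 0.98 * ε^2 := by ring
  have h3 : |x * (a * c)| ≤ |x| * ε ^ 2 := by
    rw [abs_mul]
    exact mul_le_mul_of_nonneg_left (habs a c hDT huT) (abs_nonneg x)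
  have h4 : |x * (b * d)| ≤ |x| * ε ^ 2 := by
    rw [abs_mul]
    exact mul_le_mul_of_nonneg_left (habs b d hDℓ huℓ) (abs_nonneg x)
  have htx : |t| * |x| ≤ 0.98 * |x| := mul_le_mul_of_nonneg_right hTℓ (abs_nonneg x)
  have h5 : |t * x * (a * d)| ≤ 0.98 * (|x| * ε ^ 2) := by
    rw [abs_mul, abs_mul]
    calc |t| * |x| * |a * d| ≤ (0.98 * |x|) * ε ^ 2 :=
          mul_le_mul htx (habs a d hDT huℓ) (abs_nonneg _) (by positivity)
      _ = 0.98 * (|x| * ε ^ 2) := by ring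
  have h6 : |t * x * (b * c)| ≤ 0.98 * (|x| * ε ^ 2) := by
    rw [abs_mul, abs_mul]
    calc |t| * |x| * |b * c| ≤ (0.98 * |x|) * ε ^ 2 :=
          mul_le_mul htx (habs b c hDℓ huT) (abs_nonneg _) (by positivity)
      _ = 0.98 * (|x| * ε ^ 2) := by ring
  have e1 := abs_le.mp h1
  have e2 := abs_le.mp h2
  have e3 := abs_le.mp h3
  have e4 := abs_le.mp h4
  have e5 := abs_le.mp h5
  have e6 := abs_le.mp h6
  have hxsq : x ^ 2 = |x| ^ 2 := (sq_abs x).symm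
  have h0' : (1 - t^2) * (1 - x^2)
      = (a^2 + b^2 + c^2 + d^2) - 2*(a*b*t) - 2*(c*d*t) - 2*(x*(a*c)) - 2*(x*(b*d))
        + 2*(t*x*(a*d)) + 2*(t*x*(b*c)) - (a*d - b*c)^2 := by linear_combination h0
  have hsq : (0:ℝ) ≤ (a*d - b*c)^2 := sq_nonneg _
  have stepA : (1 - t^2) * (1 - x^2) ≤ 7.92 * ε^2 + 7.92 * ( |x| * ε^2 ) := by
    linarith [e1.1, e1.2, e2.1, e2.2, e3.1, e3.2, e4.1, e4.2, e5.1, e5.2, e6.1, e6.2]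
  have hx2 : x^2 ≤ 1 := by
    rw [hxsq]
    exact pow_le_one₀ (abs_nonneg x) hx1
  have stepB : 0.0396 * (1 - x^2) ≤ (1 - t^2) * (1 - x^2) :=
    mul_le_mul_of_nonneg_right (by linarith) (by linarith)
  have hpos : (0:ℝ) < 1 + |x| := by positivity
  have hfin : 0.0396 * (1 - |x|) ≤ 7.92 * ε^2 := by
    apply le_of_mul_le_mul_right _ hpos
    calc 0.0396 * (1 - |x|) * (1 + |x|) = 0.0396 * (1 - x^2) := by rw [hxsq]; ring
      _ ≤ 7.92 * ε^2 + 7.92 * ( |x| * ε^2 ) := le_trans stepB stepA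
      _ ≤ 7.92 * ε^2 * (1 + |x|) := le_of_eq (by ring)
  linarith [hfin, sq_nonneg ε]
end

section
/- Let G = (V, E) be a finite simple graph with m = |E| ≥ 1 edges that admits a proper 3-coloring (no edge is monochromatic). Then there exists a real symmetric positive semidefinite matrix K, indexed by the disjoint union V ⊔ E, such that: (i) all eigenvalues of K lie in [0,1]; (ii) K has rank at most 3; (iii) K_{uu} = deg_G(u)/m for every vertex u ∈ V and K_{ee} = 1/m for every edge e ∈ E; and (iv) for every edge e ∈ E with endpoints u and v, the entries K_{uv}, K_{ue} and K_{ve} are all zero, so that the determinant of the 3×3 principal submatrix of K indexed by {u, v, e} equals deg_G(u)·deg_G(v)/m³. -/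
open Finset Matrix

namespace Stmt9Aux

variable {V : Type*} [Fintype V] [DecidableEq V]

/-- the "third color" of an edge -/
def tc (col : V → Fin 3) : Sym2 V → Fin 3 :=
  Sym2.lift ⟨fun a b => -(col a + col b), fun a b => by dsimp only; rw [add_comm]⟩

lemma tc_mk (col : V → Fin 3) (a b : V) : tc col s(a, b) = -(col a + col b) := by
  simp [tc]

/-- the 3 × (V ⊕ E) factor matrix -/
noncomputable def gramA (G : SimpleGraph V) [DecidableRel G.Adj] (m : ℕ) (col : V → Fin 3) :
    Matrix (Fin 3) (V ⊕ G.edgeSet) ℝ := fun c i =>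
  match i with
  | Sum.inl u => if col u = c then Real.sqrt ((G.degree u : ℝ) / m) else 0
  | Sum.inr e => if tc col e.1 = c then Real.sqrt (1 / m) else 0

lemma sum_ite_ite (p q : Fin 3) (x y : ℝ) :
    (∑ c : Fin 3, (if p = c then x else 0) * (if q = c then y else 0)) =
      if p = q then x * y else 0 := by
  by_cases h : p = q
  · subst h
    simp [Finset.sum_ite_eq, ite_mul, mul_ite]
  · simp only [h, if_false]
    apply Finset.sum_eq_zero
    intro c _
    by_cases hp : p = c
    · have : q ≠ c := fun hq => h (hp.trans hq.symm)
      simp [this]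
    · simp [hp]

lemma edge_count (G : SimpleGraph V) [DecidableRel G.Adj] (col : V → Fin 3)
    (hcol : ∀ u v : V, G.Adj u v → col u ≠ col v) (c : Fin 3) {e : Sym2 V}
    (he : e ∈ G.edgeFinset) :
    (∑ u : V, if col u = c then (if u ∈ e then 1 else 0) else (0 : ℕ))
      + (if tc col e = c then 1 else 0) = 1 := by
  induction e using Sym2.ind with
  | _ a b =>
    rw [SimpleGraph.mem_edgeFinset, SimpleGraph.mem_edgeSet] at he
    have hab : col a ≠ col b := hcol a b he
    have hne : a ≠ b := he.ne
    have hsum : (∑ u : V, if col u = c then (if u ∈ s(a, b) then 1 else 0) else (0 : ℕ))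
        = (if col a = c then 1 else 0) + (if col b = c then 1 else 0) := by
      have hf : (fun u => if col u = c then (if u ∈ s(a, b) then (1 : ℕ) else 0) else 0)
          = fun u => (if u = a then (if col a = c then 1 else 0) else 0)
            + (if u = b then (if col b = c then 1 else 0) else 0) := by
        funext u
        by_cases h1 : u = a
        · subst h1
          simp [hne, Sym2.mem_iff]
        · by_cases h2 : u = b
          · subst h2
            simp [h1, Ne.symm h1, Sym2.mem_iff]
          · simp [h1, h2, Sym2.mem_iff]
      rw [hf, Finset.sum_add_distrib, Finset.sum_ite_eq', Finset.sum_ite_eq']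
      simp
    rw [hsum, tc_mk]
    have key : ∀ x y z : Fin 3, x ≠ y →
        ((if x = z then (1 : ℕ) else 0) + (if y = z then 1 else 0))
          + (if -(x + y) = z then 1 else 0) = 1 := by decide
    exact key _ _ _ hab

lemma count_lemma (G : SimpleGraph V) [DecidableRel G.Adj] (col : V → Fin 3)
    (hcol : ∀ u v : V, G.Adj u v → col u ≠ col v) (c : Fin 3) :
    (∑ u : V, if col u = c then G.degree u else 0)
      + (G.edgeFinset.filter fun e => tc col e = c).card = G.edgeFinset.card := by
  have hdeg : ∀ u : V, G.degree u = ∑ e ∈ G.edgeFinset, if u ∈ e then 1 else 0 := by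
    intro u
    rw [← SimpleGraph.card_incidenceFinset_eq_degree]
    rw [SimpleGraph.incidenceFinset_eq_filter, Finset.card_filter]
  calc (∑ u : V, if col u = c then G.degree u else 0)
        + (G.edgeFinset.filter fun e => tc col e = c).card
      = (∑ u : V, ∑ e ∈ G.edgeFinset, if col u = c then (if u ∈ e then 1 else 0) else 0)
        + ∑ e ∈ G.edgeFinset, if tc col e = c then 1 else 0 := by
        rw [Finset.card_filter]
        congr 1
        refine Finset.sum_congr rfl fun u _ => ?_
        by_cases h : col u = c
        · simp [h, hdeg u]
        · simp [h]
    _ = ∑ e ∈ G.edgeFinset,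
          ((∑ u : V, if col u = c then (if u ∈ e then 1 else 0) else 0)
            + if tc col e = c then 1 else 0) := by
        rw [Finset.sum_add_distrib, Finset.sum_comm]
    _ = ∑ e ∈ G.edgeFinset, 1 := by
        exact Finset.sum_congr rfl fun e he => edge_count G col hcol c he
    _ = G.edgeFinset.card := by simp


@[simp] lemma gramA_inl (G : SimpleGraph V) [DecidableRel G.Adj] (m : ℕ) (col : V → Fin 3)
    (c : Fin 3) (u : V) :
    gramA G m col c (Sum.inl u) = if col u = c then Real.sqrt ((G.degree u : ℝ) / m) else 0 := rfl

@[simp] lemma gramA_inr (G : SimpleGraph V) [DecidableRel G.Adj] (m : ℕ) (col : V → Fin 3)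
    (c : Fin 3) (e : G.edgeSet) :
    gramA G m col c (Sum.inr e) = if tc col e.1 = c then Real.sqrt (1 / m) else 0 := rfl

lemma gram_mul_self (G : SimpleGraph V) [DecidableRel G.Adj] (col : V → Fin 3)
    (hcol : ∀ u v : V, G.Adj u v → col u ≠ col v) (m : ℕ)
    (hm : m = G.edgeFinset.card) (hm1 : 1 ≤ m) :
    gramA G m col * (gramA G m col)ᴴ = 1 := by
  have hm0 : (0 : ℝ) < m := by exact_mod_cast hm1
  ext c c'
  rw [Matrix.mul_apply]
  simp only [Matrix.conjTranspose_apply, star_trivial]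
  by_cases h : c = c'
  · subst h
    rw [Fintype.sum_sum_type, Matrix.one_apply_eq]
    have h1 : ∀ u : V, gramA G m col c (Sum.inl u) * gramA G m col c (Sum.inl u)
        = if col u = c then ((G.degree u : ℝ) / m) else 0 := by
      intro u
      by_cases hcu : col u = c
      · simp only [gramA_inl, hcu, if_true]
        exact Real.mul_self_sqrt (by positivity)
      · simp [hcu]
    have h2 : ∀ e : G.edgeSet, gramA G m col c (Sum.inr e) * gramA G m col c (Sum.inr e)
        = if tc col e.1 = c then (1 / m : ℝ) else 0 := by
      intro e
      by_cases hce : tc col e.1 = c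
      · simp only [gramA_inr, hce, if_true]
        exact Real.mul_self_sqrt (by positivity)
      · simp [hce]
    simp only [h1, h2]
    have hv : (∑ u : V, if col u = c then ((G.degree u : ℝ) / m) else 0)
        = ((∑ u : V, if col u = c then G.degree u else 0 : ℕ) : ℝ) / m := by
      push_cast
      rw [Finset.sum_div]
      refine Finset.sum_congr rfl fun u _ => ?_
      split <;> simp
    have he : (∑ e : G.edgeSet, if tc col e.1 = c then (1 / m : ℝ) else 0)
        = ((G.edgeFinset.filter fun e => tc col e = c).card : ℝ) / m := by
      rw [← Finset.sum_subtype G.edgeFinset (fun e => SimpleGraph.mem_edgeFinset)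
        (fun e => if tc col e = c then (1 / m : ℝ) else 0)]
      rw [Finset.sum_ite, Finset.sum_const, Finset.sum_const_zero, add_zero, nsmul_eq_mul]
      ring
    rw [hv, he, ← add_div]
    have hc := count_lemma G col hcol c
    rw [← hm] at hc
    rw [← Nat.cast_add, hc]
    field_simp
  · rw [Matrix.one_apply_ne h]
    have hz : ∀ (p : Fin 3) (x y : ℝ), (if p = c then x else 0) * (if p = c' then y else 0) = 0 := by
      intro p x y
      by_cases hp : p = c
      · have hq : p ≠ c' := fun hq => h (hp.symm.trans hq)
        simp [hq]
      · simp [hp]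
    apply Finset.sum_eq_zero
    rintro (u | e) _
    · exact hz _ _ _
    · exact hz _ _ _

lemma fin3_third_ne : ∀ x y : Fin 3, x ≠ y → -(x + y) ≠ x ∧ -(x + y) ≠ y := by decide

end Stmt9Aux

theorem stmt_9 {V : Type*} [Fintype V] [DecidableEq V]
    (G : SimpleGraph V) [DecidableRel G.Adj]
    (m : ℕ) (hm : m = G.edgeFinset.card) (hm1 : 1 ≤ m)
    (hcol : ∃ col : V → Fin 3, ∀ u v : V, G.Adj u v → col u ≠ col v) :
    ∃ K : Matrix (V ⊕ G.edgeSet) (V ⊕ G.edgeSet) ℝ, ∃ hK : K.IsHermitian,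
      (∀ i, hK.eigenvalues i ∈ Set.Icc (0 : ℝ) 1) ∧
      K.rank ≤ 3 ∧
      (∀ u : V, K (Sum.inl u) (Sum.inl u) = (G.degree u : ℝ) / m) ∧
      (∀ e : G.edgeSet, K (Sum.inr e) (Sum.inr e) = 1 / m) ∧
      (∀ u v : V, ∀ h : G.Adj u v,
        K (Sum.inl u) (Sum.inl v) = 0 ∧
        K (Sum.inl u) (Sum.inr ⟨s(u, v), (SimpleGraph.mem_edgeSet G).mpr h⟩) = 0 ∧
        K (Sum.inl v) (Sum.inr ⟨s(u, v), (SimpleGraph.mem_edgeSet G).mpr h⟩) = 0 ∧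
        (K.submatrix
            ![Sum.inl u, Sum.inl v, Sum.inr ⟨s(u, v), (SimpleGraph.mem_edgeSet G).mpr h⟩]
            ![Sum.inl u, Sum.inl v, Sum.inr ⟨s(u, v), (SimpleGraph.mem_edgeSet G).mpr h⟩]).det =
          (G.degree u : ℝ) * (G.degree v : ℝ) / (m : ℝ) ^ 3) := by
  classical
  obtain ⟨col, hcol⟩ := hcol
  have hm0 : (0 : ℝ) < m := by exact_mod_cast hm1
  set A := Stmt9Aux.gramA G m col with hAdef
  have hAA : A * Aᴴ = 1 := Stmt9Aux.gram_mul_self G col hcol m hm hm1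
  have hP : (Aᴴ * A).PosSemidef := Matrix.posSemidef_conjTranspose_mul_self A
  set K := Aᴴ * A with hKdef
  have hK : K.IsHermitian := hP.1
  have hent : ∀ i j, K i j = ∑ c : Fin 3, A c i * A c j := by
    intro i j
    rw [hKdef, Matrix.mul_apply]
    simp [Matrix.conjTranspose_apply]
  -- entry computations
  have hdiagV : ∀ u : V, K (Sum.inl u) (Sum.inl u) = (G.degree u : ℝ) / m := by
    intro u
    rw [hent]
    simp only [hAdef, Stmt9Aux.gramA_inl]
    rw [Stmt9Aux.sum_ite_ite, if_pos rfl]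
    exact Real.mul_self_sqrt (by positivity)
  have hdiagE : ∀ e : G.edgeSet, K (Sum.inr e) (Sum.inr e) = 1 / (m : ℝ) := by
    intro e
    rw [hent]
    simp only [hAdef, Stmt9Aux.gramA_inr]
    rw [Stmt9Aux.sum_ite_ite, if_pos rfl]
    exact Real.mul_self_sqrt (by positivity)
  have hzVV : ∀ u v : V, col u ≠ col v → K (Sum.inl u) (Sum.inl v) = 0 := by
    intro u v huv
    rw [hent]
    simp only [hAdef, Stmt9Aux.gramA_inl]
    rw [Stmt9Aux.sum_ite_ite, if_neg huv]
  have hzVE : ∀ (u : V) (e : G.edgeSet), col u ≠ Stmt9Aux.tc col e.1 →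
      K (Sum.inl u) (Sum.inr e) = 0 := by
    intro u e hne
    rw [hent]
    simp only [hAdef, Stmt9Aux.gramA_inl, Stmt9Aux.gramA_inr]
    rw [Stmt9Aux.sum_ite_ite, if_neg hne]
  have hsym : ∀ i j, K j i = K i j := by
    intro i j
    rw [hent, hent]
    exact Finset.sum_congr rfl fun c _ => mul_comm _ _
  refine ⟨K, hK, ?_, ?_, hdiagV, hdiagE, ?_⟩
  · -- eigenvalues in [0,1]
    intro i
    refine ⟨hP.eigenvalues_nonneg i, ?_⟩
    have hidem : K * K = K := by
      rw [hKdef, Matrix.mul_assoc, ← Matrix.mul_assoc A, hAA, Matrix.one_mul]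
    set μ := hK.eigenvalues i with hμ
    set v := (WithLp.equiv 2 _) (hK.eigenvectorBasis i) with hv
    have h1 : K *ᵥ v = μ • v := hK.mulVec_eigenvectorBasis i
    have h2 : (μ * μ) • v = μ • v := by
      have : K *ᵥ (K *ᵥ v) = K *ᵥ v := by
        rw [Matrix.mulVec_mulVec, hidem]
      rw [h1, Matrix.mulVec_smul, h1, smul_smul] at this
      exact this
    have hvne : v ≠ 0 := by
      intro h0
      have hb := hK.eigenvectorBasis.orthonormal.ne_zero i
      apply hb
      have := congrArg (WithLp.equiv 2 _).symm h0
      simpa [hv] using this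
    have hmu : μ * μ = μ := by
      have hd : (μ * μ - μ) • v = 0 := by rw [sub_smul, h2, sub_self]
      rcases smul_eq_zero.mp hd with h | h
      · linarith [sub_eq_zero.mp (by linarith [h] : μ * μ - μ = 0)]
      · exact absurd h hvne
    nlinarith [hP.eigenvalues_nonneg i]
  · -- rank
    rw [hKdef, Matrix.rank_conjTranspose_mul_self]
    calc A.rank ≤ Fintype.card (Fin 3) := Matrix.rank_le_card_height A
      _ = 3 := by simp
  · -- edge conditions
    intro u v h
    have hcuv : col u ≠ col v := hcol u v h
    set e : G.edgeSet := ⟨s(u, v), (SimpleGraph.mem_edgeSet G).mpr h⟩ with hedef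
    have htc : Stmt9Aux.tc col e.1 = -(col u + col v) := Stmt9Aux.tc_mk col u v
    have hthird := Stmt9Aux.fin3_third_ne (col u) (col v) hcuv
    have z1 : K (Sum.inl u) (Sum.inl v) = 0 := hzVV u v hcuv
    have z2 : K (Sum.inl u) (Sum.inr e) = 0 := by
      refine hzVE u e ?_
      rw [htc]; exact (hthird.1).symm
    have z3 : K (Sum.inl v) (Sum.inr e) = 0 := by
      refine hzVE v e ?_
      rw [htc]; exact (hthird.2).symm
    refine ⟨z1, z2, z3, ?_⟩
    rw [Matrix.det_fin_three]
    simp only [Matrix.submatrix_apply, Matrix.cons_val_zero, Matrix.cons_val_one,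
      Matrix.head_cons, Matrix.cons_val_two, Matrix.tail_cons]
    rw [z1, z2, z3, hsym (Sum.inl u) (Sum.inl v), hsym (Sum.inl u) (Sum.inr e),
      hsym (Sum.inl v) (Sum.inr e), z1, z2, z3, hdiagV u, hdiagV v, hdiagE e]
    have h3 : (m:ℝ)^3 = m*m*m := by ring
    rw [h3]
    field_simp
    ring
end

section
/- Let N and m be positive integers and let X₁, …, X_m ⊆ {1,…,N} be given subsets. For a real symmetric positive semidefinite N×N matrix K with all eigenvalues in [0,1] define L(K) = ∏_{j=1}^{m} |det(K − I_{X̄ⱼ})|, where for X ⊆ {1,…,N}, I_{X̄} denotes the diagonal 0/1 matrix with ones exactly on the diagonal entries indexed by the complement of X. If K maximizes L over all real symmetric positive semidefinite N×N matrices with all eigenvalues in [0,1], then for every j ∈ {1,…,m} one has |det(K − I_{X̄ⱼ})| ≥ 2^{−mN}. -/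
open Matrix

/-- If `K` is PSD with eigenvalues ≤ 1, then `1 - K` is PSD. -/
lemma one_sub_posSemidef {N : ℕ} (K : Matrix (Fin N) (Fin N) ℝ)
    (hK : K.PosSemidef) (h1 : ∀ i, hK.isHermitian.eigenvalues i ≤ 1) :
    (1 - K).PosSemidef := by
  have hH := hK.isHermitian
  have hspec := hH.spectral_theorem
  set U : Matrix (Fin N) (Fin N) ℝ := (hH.eigenvectorUnitary : Matrix (Fin N) (Fin N) ℝ)
  have hU : U ∈ Matrix.unitaryGroup (Fin N) ℝ := hH.eigenvectorUnitary.2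
  have hone : U * 1 * star U = 1 := by
    rw [mul_one, (Matrix.mem_unitaryGroup_iff).mp hU]
  have : 1 - K = U * (1 - diagonal (RCLike.ofReal ∘ hH.eigenvalues)) * star U := by
    simp only [Unitary.conjStarAlgAut_apply, Unitary.coe_star] at hspec
    rw [Matrix.mul_sub, Matrix.sub_mul, ← hspec]
    congr 1
    exact hone.symm
  rw [this]
  have hd : (1 - diagonal (RCLike.ofReal ∘ hH.eigenvalues) :
      Matrix (Fin N) (Fin N) ℝ).PosSemidef := by
    rw [← Matrix.diagonal_one, Matrix.diagonal_sub]
    exact Matrix.posSemidef_diagonal_iff.mpr fun i => by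
      simpa using h1 i
  simpa [Matrix.star_eq_conjTranspose] using hd.mul_mul_conjTranspose_same U

/-- Each factor of the likelihood is at most 1. -/
lemma factor_le_one {N : ℕ} (K : Matrix (Fin N) (Fin N) ℝ)
    (hK : K.PosSemidef) (h1 : ∀ i, hK.isHermitian.eigenvalues i ≤ 1)
    (S : Finset (Fin N)) :
    |(K - Matrix.diagonal fun i => if i ∈ S then (0 : ℝ) else 1).det| ≤ 1 := by
  set d : Fin N → ℝ := fun i => if i ∈ S then (0 : ℝ) else 1 with hd
  set A : Matrix (Fin N) (Fin N) ℝ := K - Matrix.diagonal d with hA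
  have hDpsd : (Matrix.diagonal d).PosSemidef :=
    Matrix.posSemidef_diagonal_iff.mpr fun i => by by_cases h : i ∈ S <;> simp [d, h]
  have hDpsd' : (1 - Matrix.diagonal d).PosSemidef := by
    rw [← Matrix.diagonal_one, Matrix.diagonal_sub]
    exact Matrix.posSemidef_diagonal_iff.mpr fun i => by by_cases h : i ∈ S <;> simp [d, h]
  have hKpsd' := one_sub_posSemidef K hK h1
  have hAH : A.IsHermitian := hK.isHermitian.sub (Matrix.isHermitian_diagonal _)
  -- each eigenvalue of A lies in [-1, 1]
  have key : ∀ i, |hAH.eigenvalues i| ≤ 1 := by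
    intro i
    have hev := hAH.eigenvalues_eq i
    set v : Fin N → ℝ := ⇑(hAH.eigenvectorBasis i) with hv
    have hμ : hAH.eigenvalues i = dotProduct v (A *ᵥ v) := by
      simpa [star_trivial] using hev
    have hKle : dotProduct v ((1 - K) *ᵥ v) ≥ 0 := by
      simpa [star_trivial] using hKpsd'.re_dotProduct_nonneg v
    have hKge : dotProduct v (K *ᵥ v) ≥ 0 := by
      simpa [star_trivial] using hK.re_dotProduct_nonneg v
    have hDle : dotProduct v ((1 - Matrix.diagonal d) *ᵥ v) ≥ 0 := by
      simpa [star_trivial] using hDpsd'.re_dotProduct_nonneg v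
    have hDge : dotProduct v (Matrix.diagonal d *ᵥ v) ≥ 0 := by
      simpa [star_trivial] using hDpsd.re_dotProduct_nonneg v
    have hsub : dotProduct v (A *ᵥ v)
        = dotProduct v (K *ᵥ v) - dotProduct v (Matrix.diagonal d *ᵥ v) := by
      rw [hA, Matrix.sub_mulVec, dotProduct_sub]
    have hsubK : dotProduct v ((1 - K) *ᵥ v)
        = dotProduct v v - dotProduct v (K *ᵥ v) := by
      rw [Matrix.sub_mulVec, dotProduct_sub, Matrix.one_mulVec]
    have hsubD : dotProduct v ((1 - Matrix.diagonal d) *ᵥ v)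
        = dotProduct v v - dotProduct v (Matrix.diagonal d *ᵥ v) := by
      rw [Matrix.sub_mulVec, dotProduct_sub, Matrix.one_mulVec]
    have hvv : dotProduct v v = 1 := by
      have hnorm : ‖hAH.eigenvectorBasis i‖ = 1 := hAH.eigenvectorBasis.orthonormal.1 i
      have : (inner ℝ (hAH.eigenvectorBasis i) (hAH.eigenvectorBasis i) : ℝ) = 1 := by
        rw [real_inner_self_eq_norm_sq, hnorm]; norm_num
      simpa only [PiLp.inner_apply, RCLike.inner_apply, conj_trivial, dotProduct] using this
    rw [abs_le]
    constructor
    · rw [hμ, hsub]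
      nlinarith [hDle, hsubD, hvv, hKge]
    · rw [hμ, hsub]
      nlinarith [hKle, hsubK, hvv, hDge]
  calc |A.det| = |∏ i, hAH.eigenvalues i| := by
        rw [hAH.det_eq_prod_eigenvalues]; norm_cast
    _ = ∏ i, |hAH.eigenvalues i| := by rw [Finset.abs_prod]
    _ ≤ ∏ i, (1 : ℝ) := Finset.prod_le_prod (fun i _ => abs_nonneg _) (fun i _ => key i)
    _ = 1 := by simp

theorem stmt_13 (N m : ℕ) (hN : 0 < N) (hm : 0 < m) (X : Fin m → Finset (Fin N))
    (K : Matrix (Fin N) (Fin N) ℝ)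
    (hK : ∃ h : K.PosSemidef, ∀ i, h.isHermitian.eigenvalues i ≤ 1)
    (hmax : ∀ K' : Matrix (Fin N) (Fin N) ℝ,
      (∃ h' : K'.PosSemidef, ∀ i, h'.isHermitian.eigenvalues i ≤ 1) →
      ∏ j, |(K' - Matrix.diagonal fun i => if i ∈ X j then (0 : ℝ) else 1).det| ≤
        ∏ j, |(K - Matrix.diagonal fun i => if i ∈ X j then (0 : ℝ) else 1).det|) :
    ∀ j : Fin m,
      (2 : ℝ) ^ (-(m * N : ℤ)) ≤
        |(K - Matrix.diagonal fun i => if i ∈ X j then (0 : ℝ) else 1).det| := by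
  obtain ⟨hKpsd, hKev⟩ := hK
  set f : Fin m → ℝ := fun j =>
    |(K - Matrix.diagonal fun i => if i ∈ X j then (0 : ℝ) else 1).det| with hf
  -- the trivial kernel (1/2) • 1
  set K₀ : Matrix (Fin N) (Fin N) ℝ := Matrix.diagonal (fun _ => (1/2 : ℝ)) with hK₀
  have hK₀psd : K₀.PosSemidef := by
    rw [hK₀]
    exact Matrix.posSemidef_diagonal_iff.mpr fun i => by norm_num
  have hK₀ev : ∀ i, hK₀psd.isHermitian.eigenvalues i ≤ 1 := by
    intro i
    have hev := hK₀psd.isHermitian.eigenvalues_eq i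
    set v : Fin N → ℝ := ⇑(hK₀psd.isHermitian.eigenvectorBasis i) with hv
    have hvv : dotProduct v v = 1 := by
      have hnorm : ‖hK₀psd.isHermitian.eigenvectorBasis i‖ = 1 :=
        hK₀psd.isHermitian.eigenvectorBasis.orthonormal.1 i
      have : (inner ℝ (hK₀psd.isHermitian.eigenvectorBasis i)
          (hK₀psd.isHermitian.eigenvectorBasis i) : ℝ) = 1 := by
        rw [real_inner_self_eq_norm_sq, hnorm]; norm_num
      simpa only [PiLp.inner_apply, RCLike.inner_apply, conj_trivial, dotProduct] using this
    have : hK₀psd.isHermitian.eigenvalues i = 1/2 := by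
      rw [hev]
      have : K₀ *ᵥ v = (1/2 : ℝ) • v := by
        ext k
        rw [hK₀, Matrix.mulVec_diagonal]
        simp
      rw [this]
      simp only [star_trivial, dotProduct_smul, RCLike.re_to_real]
      rw [smul_eq_mul, hvv]; norm_num
    rw [this]; norm_num
  have hlow : (2 : ℝ) ^ (-(m * N : ℤ)) ≤ ∏ j, f j := by
    have h0 : ∏ j, |(K₀ - Matrix.diagonal fun i => if i ∈ X j then (0 : ℝ) else 1).det|
        = (2 : ℝ) ^ (-(m * N : ℤ)) := by
      have hdet : ∀ j : Fin m,
          |(K₀ - Matrix.diagonal fun i => if i ∈ X j then (0 : ℝ) else 1).det|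
          = (1/2 : ℝ) ^ N := by
        intro j
        have : K₀ - Matrix.diagonal (fun i => if i ∈ X j then (0 : ℝ) else 1)
            = Matrix.diagonal (fun i => (1/2 : ℝ) - if i ∈ X j then (0 : ℝ) else 1) := by
          rw [hK₀, Matrix.diagonal_sub]
        rw [this, Matrix.det_diagonal, Finset.abs_prod]
        rw [show (1/2 : ℝ) ^ N = ∏ _i : Fin N, (1/2 : ℝ) by simp]
        refine Finset.prod_congr rfl fun i _ => ?_
        by_cases h : i ∈ X j <;> simp [h] <;> norm_num
      rw [Finset.prod_congr rfl fun j _ => hdet j, Finset.prod_const, Finset.card_univ,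
        Fintype.card_fin, ← pow_mul]
      rw [div_pow, one_pow, ← zpow_natCast (2:ℝ) (N*m)]
      rw [one_div, ← _root_.zpow_neg]
      congr 1
      push_cast
      ring
    calc (2 : ℝ) ^ (-(m * N : ℤ)) = _ := h0.symm
      _ ≤ ∏ j, f j := hmax K₀ ⟨hK₀psd, hK₀ev⟩
  intro j
  have hle1 : ∀ k, f k ≤ 1 := fun k => factor_le_one K hKpsd hKev (X k)
  have hnonneg : ∀ k, 0 ≤ f k := fun k => abs_nonneg _
  have hsplit : ∏ k, f k = f j * ∏ k ∈ Finset.univ.erase j, f k :=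
    (Finset.mul_prod_erase Finset.univ f (Finset.mem_univ j)).symm
  have hrest : ∏ k ∈ Finset.univ.erase j, f k ≤ 1 :=
    Finset.prod_le_one (fun k _ => hnonneg k) (fun k _ => hle1 k)
  calc (2 : ℝ) ^ (-(m * N : ℤ)) ≤ ∏ k, f k := hlow
    _ = f j * ∏ k ∈ Finset.univ.erase j, f k := hsplit
    _ ≤ f j * 1 := by
        exact mul_le_mul_of_nonneg_left hrest (hnonneg j)
    _ = f j := mul_one _
end

section
/- Let N be a positive integer and let p₁, …, p_N and p_max be real numbers with 0 < pᵢ ≤ p_max < 1 for every i. Then ∑_{i=1}^{N} (1 − pᵢ)·log(1/(1 − pᵢ)) ≤ (1 / log(1/p_max)) · ∑_{i=1}^{N} pᵢ·log(1/pᵢ). -/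
theorem stmt_14 (N : ℕ) (hN : 0 < N) (p : Fin N → ℝ) (pmax : ℝ)
    (hp0 : ∀ i, 0 < p i) (hpmax : ∀ i, p i ≤ pmax) (hpm1 : pmax < 1) :
    ∑ i, (1 - p i) * Real.log (1 / (1 - p i)) ≤
      (1 / Real.log (1 / pmax)) * ∑ i, p i * Real.log (1 / p i) := by
  have hpm0 : 0 < pmax := lt_of_lt_of_le (hp0 ⟨0, hN⟩) (hpmax ⟨0, hN⟩)
  have hL : 0 < Real.log (1 / pmax) := by
    apply Real.log_pos
    rw [lt_div_iff₀ hpm0]; linarith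
  rw [Finset.mul_sum]
  apply Finset.sum_le_sum
  intro i _
  have h0 : 0 < p i := hp0 i
  have h1 : p i < 1 := lt_of_le_of_lt (hpmax i) hpm1
  have h1p : 0 < 1 - p i := by linarith
  -- Step 1: (1-p)*log(1/(1-p)) ≤ p
  have step1 : (1 - p i) * Real.log (1 / (1 - p i)) ≤ p i := by
    have hlog : Real.log (1 / (1 - p i)) ≤ 1 / (1 - p i) - 1 :=
      Real.log_le_sub_one_of_pos (by positivity)
    have := mul_le_mul_of_nonneg_left hlog (le_of_lt h1p)
    calc (1 - p i) * Real.log (1 / (1 - p i)) ≤ (1 - p i) * (1 / (1 - p i) - 1) := this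
      _ = p i := by field_simp; ring
  -- Step 2: p ≤ (1/L) * (p * log(1/p))
  have hmono : Real.log (1 / pmax) ≤ Real.log (1 / p i) := by
    apply Real.log_le_log (by positivity)
    apply div_le_div_of_nonneg_left (by norm_num) h0 (hpmax i)
  have step2 : p i ≤ 1 / Real.log (1 / pmax) * (p i * Real.log (1 / p i)) := by
    rw [one_div, inv_mul_eq_div, le_div_iff₀ hL]
    nlinarith
  linarith
end

section
/- The function f defined on the open interval (0,1) by f(x) = ((1 − x)·log(1 − x)) / (x·log x) is positive and monotonically increasing: for all x, y with 0 < x ≤ y < 1 one has 0 < f(x) ≤ f(y). -/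
open Real

-- key algebraic inequality: with a = -log t, b = -log(1-t),
-- t*a + (1-t)*b ≥ a*b
lemma key_ineq (t : ℝ) (h0 : 0 < t) (h1 : t < 1) :
    0 ≤ (-Real.log (1 - t) - 1) * (t * Real.log t) -
        ((1 - t) * Real.log (1 - t)) * (Real.log t + 1) := by
  have hv : 0 < 1 - t := by linarith
  have ha : 0 < -Real.log t := by
    have := Real.log_neg h0 h1; linarith
  have hb : 0 < -Real.log (1 - t) := by
    have := Real.log_neg hv (by linarith); linarith
  have hau : (-Real.log t) * t ≤ 1 - t := by
    have h := Real.log_le_sub_one_of_pos (x := t⁻¹) (by positivity)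
    rw [Real.log_inv] at h
    have := mul_le_mul_of_nonneg_right h h0.le
    calc (-Real.log t) * t ≤ (t⁻¹ - 1) * t := this
      _ = 1 - t := by field_simp
  have hbv : (-Real.log (1 - t)) * (1 - t) ≤ t := by
    have h := Real.log_le_sub_one_of_pos (x := (1 - t)⁻¹) (by positivity)
    rw [Real.log_inv] at h
    have := mul_le_mul_of_nonneg_right h hv.le
    calc (-Real.log (1 - t)) * (1 - t) ≤ ((1 - t)⁻¹ - 1) * (1 - t) := this
      _ = t := by field_simp; ring
  nlinarith [mul_le_mul_of_nonneg_left hau hb.le,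
    mul_le_mul_of_nonneg_left hbv ha.le, mul_pos ha hb]

lemma f_deriv (t : ℝ) (h0 : 0 < t) (h1 : t < 1) :
    HasDerivAt (fun s => ((1 - s) * Real.log (1 - s)) / (s * Real.log s))
      (((-Real.log (1 - t) - 1) * (t * Real.log t) -
        ((1 - t) * Real.log (1 - t)) * (Real.log t + 1)) / (t * Real.log t) ^ 2) t := by
  have hv : 0 < 1 - t := by linarith
  have hlt : Real.log t < 0 := Real.log_neg h0 h1
  have hD : t * Real.log t ≠ 0 := by
    exact ne_of_lt (mul_neg_of_pos_of_neg h0 hlt)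
  have hN : HasDerivAt (fun s : ℝ => (1 - s) * Real.log (1 - s))
      (-Real.log (1 - t) - 1) t := by
    have h1v : HasDerivAt (fun s : ℝ => 1 - s) (-1) t := by
      simpa using (hasDerivAt_id t).const_sub 1
    have hlog : HasDerivAt (fun s : ℝ => Real.log (1 - s)) (-1 / (1 - t)) t :=
      h1v.log hv.ne'
    have : HasDerivAt (fun s : ℝ => (1 - s) * Real.log (1 - s)) _ t := h1v.mul hlog
    convert this using 1
    field_simp
    ring
  have hDd : HasDerivAt (fun s : ℝ => s * Real.log s) (Real.log t + 1) t := by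
    have hlog : HasDerivAt Real.log (1 / t) t := by
      simpa using Real.hasDerivAt_log h0.ne'
    have : HasDerivAt (fun s : ℝ => s * Real.log s) _ t := (hasDerivAt_id t).mul hlog
    convert this using 1
    field_simp
    simp only [id]; ring
  exact hN.div hDd hD

theorem stmt_15 (x y : ℝ) (hx : 0 < x) (hxy : x ≤ y) (hy : y < 1) :
    0 < ((1 - x) * Real.log (1 - x)) / (x * Real.log x) ∧
      ((1 - x) * Real.log (1 - x)) / (x * Real.log x) ≤
        ((1 - y) * Real.log (1 - y)) / (y * Real.log y) := by
  have hx1 : x < 1 := lt_of_le_of_lt hxy hy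
  have hy0 : 0 < y := lt_of_lt_of_le hx hxy
  constructor
  · have hnum : (1 - x) * Real.log (1 - x) < 0 :=
      mul_neg_of_pos_of_neg (by linarith) (Real.log_neg (by linarith) (by linarith))
    have hden : x * Real.log x < 0 :=
      mul_neg_of_pos_of_neg hx (Real.log_neg hx hx1)
    exact div_pos_of_neg_of_neg hnum hden
  · set f : ℝ → ℝ := fun s => ((1 - s) * Real.log (1 - s)) / (s * Real.log s) with hf
    have hmono : MonotoneOn f (Set.Icc x y) := by
      apply monotoneOn_of_deriv_nonneg (convex_Icc x y)
      · intro t ht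
        exact ((f_deriv t (lt_of_lt_of_le hx ht.1)
          (lt_of_le_of_lt ht.2 hy)).continuousAt).continuousWithinAt
      · intro t ht
        rw [interior_Icc] at ht
        exact ((f_deriv t (lt_of_lt_of_le hx ht.1.le)
          (lt_of_le_of_lt ht.2.le hy)).differentiableAt).differentiableWithinAt
      · intro t ht
        rw [interior_Icc] at ht
        have h0 : 0 < t := lt_of_lt_of_le hx ht.1.le
        have h1 : t < 1 := lt_of_le_of_lt ht.2.le hy
        rw [(f_deriv t h0 h1).deriv]
        have hD : t * Real.log t ≠ 0 :=
          ne_of_lt (mul_neg_of_pos_of_neg h0 (Real.log_neg h0 h1))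
        apply div_nonneg (key_ineq t h0 h1) (by positivity)
    exact hmono (Set.left_mem_Icc.2 hxy) (Set.right_mem_Icc.2 hxy) hxy
end

section
/- Let m ≥ 2 and N ≥ 1 be integers, and let a₁, …, a_N be integers with 1 ≤ aᵢ ≤ m − 1 for all i. Let a_max = max_i aᵢ. Then −∑_{i=1}^{N} [ aᵢ·log(aᵢ/m) + (m − aᵢ)·log(1 − aᵢ/m) ] ≤ (1 + 1/log(m/a_max)) · ( −∑_{i=1}^{N} aᵢ·log(aᵢ/m) ). -/
theorem stmt_18 (m N : ℕ) (hm : 2 ≤ m) (hN : 1 ≤ N) (a : Fin N → ℕ)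
    (ha : ∀ i, 1 ≤ a i ∧ a i ≤ m - 1) (amax : ℕ)
    (hamax : IsGreatest (Set.range a) amax) :
    -∑ i, ((a i : ℝ) * Real.log ((a i : ℝ) / m) +
        ((m : ℝ) - (a i : ℝ)) * Real.log (1 - (a i : ℝ) / m)) ≤
      (1 + 1 / Real.log ((m : ℝ) / (amax : ℝ))) *
        (-∑ i, (a i : ℝ) * Real.log ((a i : ℝ) / m)) := by
  have hm2 : (2:ℝ) ≤ m := by exact_mod_cast hm
  obtain ⟨i0, hi0⟩ := hamax.1
  have hmax1 : 1 ≤ amax := hi0 ▸ (ha i0).1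
  have hmaxm : amax ≤ m - 1 := hi0 ▸ (ha i0).2
  have hmaxlt : (amax:ℝ) < m := by
    have : amax < m := by omega
    exact_mod_cast this
  have hmaxpos : (0:ℝ) < amax := by exact_mod_cast hmax1
  set L := Real.log ((m:ℝ)/amax) with hLdef
  have hL : 0 < L := Real.log_pos ((one_lt_div hmaxpos).2 hmaxlt)
  have key : ∀ i, -(((m:ℝ) - a i) * Real.log (1 - (a i:ℝ) / m)) ≤
      (1/L) * (-((a i:ℝ) * Real.log ((a i:ℝ) / m))) := by
    intro i
    have hb1 : (1:ℝ) ≤ a i := by exact_mod_cast (ha i).1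
    have hblt : (a i:ℝ) < m := by
      have h1 := (ha i).2
      have : a i < m := by omega
      exact_mod_cast this
    have hbpos : (0:ℝ) < a i := by linarith
    have hmpos : (0:ℝ) < m := by linarith
    have hmb : (0:ℝ) < (m:ℝ) - a i := by linarith
    have h1 : (1:ℝ) - (a i:ℝ) / m = ((m:ℝ) - a i)/m := by field_simp
    have hlog1 : Real.log (1 - (a i:ℝ)/m) = Real.log ((m:ℝ) - a i) - Real.log m := by
      rw [h1, Real.log_div hmb.ne' hmpos.ne']
    have hy : Real.log ((m:ℝ)/((m:ℝ) - a i)) ≤ (m:ℝ)/((m:ℝ) - a i) - 1 :=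
      Real.log_le_sub_one_of_pos (by positivity)
    have hlog2 : Real.log ((m:ℝ)/((m:ℝ) - a i)) = Real.log m - Real.log ((m:ℝ) - a i) :=
      Real.log_div hmpos.ne' hmb.ne'
    have h3 : ((m:ℝ) - a i) * ((m:ℝ)/((m:ℝ) - a i) - 1) = a i := by field_simp; ring
    have step1 : -(((m:ℝ) - a i) * Real.log (1 - (a i:ℝ) / m)) ≤ a i := by
      rw [hlog1]
      nlinarith [hy, hmb]
    have hamaxi : (a i:ℝ) ≤ amax := by exact_mod_cast hamax.2 ⟨i, rfl⟩
    have hLle : L ≤ Real.log ((m:ℝ)/(a i:ℝ)) := by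
      rw [hLdef]
      gcongr
    have hrw : -((a i:ℝ) * Real.log ((a i:ℝ) / m)) = (a i:ℝ) * Real.log ((m:ℝ) / a i) := by
      rw [Real.log_div hbpos.ne' hmpos.ne', Real.log_div hmpos.ne' hbpos.ne']; ring
    have hmul : (a i:ℝ) * L ≤ (a i:ℝ) * Real.log ((m:ℝ)/(a i:ℝ)) :=
      mul_le_mul_of_nonneg_left hLle hbpos.le
    calc -(((m:ℝ) - a i) * Real.log (1 - (a i:ℝ) / m)) ≤ a i := step1
      _ ≤ (1/L) * ((a i:ℝ) * Real.log ((m:ℝ) / a i)) := by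
          rw [one_div, inv_mul_eq_div, le_div_iff₀ hL]; linarith
      _ = (1/L) * (-((a i:ℝ) * Real.log ((a i:ℝ) / m))) := by rw [hrw]
  have hsum : ∑ i, -(((m:ℝ) - a i) * Real.log (1 - (a i:ℝ) / m)) ≤
      ∑ i, (1/L) * (-((a i:ℝ) * Real.log ((a i:ℝ) / m))) :=
    Finset.sum_le_sum fun i _ => key i
  have e1 : -∑ i, ((a i : ℝ) * Real.log ((a i : ℝ) / m) +
        ((m : ℝ) - (a i : ℝ)) * Real.log (1 - (a i : ℝ) / m)) =
      (∑ i, -((a i:ℝ) * Real.log ((a i:ℝ) / m))) +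
        ∑ i, -(((m:ℝ) - a i) * Real.log (1 - (a i:ℝ) / m)) := by
    rw [Finset.sum_add_distrib, neg_add, ← Finset.sum_neg_distrib, ← Finset.sum_neg_distrib]
  have e2 : (1 + 1 / L) * (-∑ i, (a i : ℝ) * Real.log ((a i : ℝ) / m)) =
      (∑ i, -((a i:ℝ) * Real.log ((a i:ℝ) / m))) +
        ∑ i, (1/L) * (-((a i:ℝ) * Real.log ((a i:ℝ) / m))) := by
    rw [← Finset.mul_sum, ← Finset.sum_neg_distrib]
    ring
  rw [e1, e2]
  linarith [hsum]
end

section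
/- Let m ≥ 2 and N ≥ 1 be integers, and let a₁, …, a_N be integers with 1 ≤ aᵢ ≤ m − 1 for all i. Then −∑_{i=1}^{N} [ aᵢ·log(aᵢ/m) + (m − aᵢ)·log(1 − aᵢ/m) ] ≤ (1 + (1 + 1/(m−1))·log m) · ( −∑_{i=1}^{N} aᵢ·log(aᵢ/m) ). -/
lemma chord' (M b : ℝ) (hM : 2 ≤ M) (hb1 : 1 ≤ b) (hbM : b ≤ M - 1) :
    (b - 1) * Real.log M ≤ (M - 1) * Real.log b := by
  have hM1 : (0:ℝ) < M - 1 := by linarith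
  have cc := strictConcaveOn_log_Ioi.concaveOn
  have h := cc.2 (Set.mem_Ioi.mpr (by norm_num : (0:ℝ) < 1))
    (Set.mem_Ioi.mpr (by linarith : (0:ℝ) < M))
    (div_nonneg (by linarith) hM1.le : (0:ℝ) ≤ (M - b)/(M-1))
    (div_nonneg (by linarith) hM1.le : (0:ℝ) ≤ (b - 1)/(M-1))
    (by field_simp; ring)
  have harg : ((M - b)/(M-1)) • (1:ℝ) + ((b-1)/(M-1)) • M = b := by
    rw [smul_eq_mul, smul_eq_mul]; field_simp; ring
  rw [harg, Real.log_one, smul_eq_mul, smul_eq_mul, mul_zero, zero_add] at h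
  rw [div_mul_eq_mul_div, div_le_iff₀ hM1] at h
  linarith [h]

lemma keyterm (M s : ℝ) (hM : 2 ≤ M) (hs1 : 1 ≤ s) (hs2 : s ≤ M - 1) :
    -(s * Real.log (s/M) + (M - s) * Real.log (1 - s/M)) ≤
      (1 + (1 + 1/(M-1)) * Real.log M) * (-(s * Real.log (s/M))) := by
  have hM0 : (0:ℝ) < M := by linarith
  have hM1 : (0:ℝ) < M - 1 := by linarith
  set b : ℝ := M - s with hbdef
  have hb1 : 1 ≤ b := by simp [hbdef]; linarith
  have hbM : b ≤ M - 1 := by simp [hbdef]; linarith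
  have hb0 : (0:ℝ) < b := by linarith
  have hs0 : (0:ℝ) < s := by linarith
  have heq : 1 - s/M = b/M := by field_simp; exact hbdef.symm
  rw [heq, Real.log_div hb0.ne' hM0.ne', Real.log_div hs0.ne' hM0.ne']
  have hL : 0 ≤ Real.log M := Real.log_nonneg (by linarith)
  -- Claim A: log M - log b ≤ s * log M / (M-1)
  have hA := chord' M b hM hb1 hbM
  have hA' : Real.log M - Real.log b ≤ s * Real.log M / (M-1) := by
    rw [le_div_iff₀ hM1]
    nlinarith [hA]
  -- Claim B: log M - log s ≥ b/M
  have hB : Real.log (s/M) ≤ s/M - 1 := Real.log_le_sub_one_of_pos (by positivity)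
  rw [Real.log_div hs0.ne' hM0.ne'] at hB
  have hB' : b/M ≤ Real.log M - Real.log s := by
    rw [div_le_iff₀ hM0]
    have h1 := mul_le_mul_of_nonneg_right hB hM0.le
    have h2 : s/M * M = s := div_mul_cancel₀ s hM0.ne'
    nlinarith [h1, h2]
  -- combine
  have step1 : b * (Real.log M - Real.log b) ≤ b * s * Real.log M / (M-1) := by
    have := mul_le_mul_of_nonneg_left hA' hb0.le
    calc b * (Real.log M - Real.log b) ≤ b * (s * Real.log M / (M-1)) := this
      _ = b * s * Real.log M / (M-1) := by ring
  have step2 : b * s * Real.log M / (M-1) ≤ (1 + 1/(M-1)) * Real.log M * (s * (Real.log M - Real.log s)) := by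
    have h1 : (1 + 1/(M-1)) * Real.log M * (s * (b/M)) ≤
        (1 + 1/(M-1)) * Real.log M * (s * (Real.log M - Real.log s)) := by
      apply mul_le_mul_of_nonneg_left _ (by positivity)
      exact mul_le_mul_of_nonneg_left hB' hs0.le
    have h2 : (1 + 1/(M-1)) * Real.log M * (s * (b/M)) = b * s * Real.log M / (M-1) := by
      field_simp
      ring
    linarith
  nlinarith [step1, step2]

theorem stmt_19 (m N : ℕ) (hm : 2 ≤ m) (hN : 1 ≤ N) (a : Fin N → ℕ)
    (ha : ∀ i, 1 ≤ a i ∧ a i ≤ m - 1) :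
    -∑ i, ((a i : ℝ) * Real.log ((a i : ℝ) / m) +
        ((m : ℝ) - (a i : ℝ)) * Real.log (1 - (a i : ℝ) / m)) ≤
      (1 + (1 + 1 / ((m : ℝ) - 1)) * Real.log m) *
        (-∑ i, (a i : ℝ) * Real.log ((a i : ℝ) / m)) := by
  rw [← Finset.sum_neg_distrib, ← Finset.sum_neg_distrib, Finset.mul_sum]
  apply Finset.sum_le_sum
  intro i _
  have h1 : (1:ℝ) ≤ (a i : ℝ) := by exact_mod_cast (ha i).1
  have h2 : (a i : ℝ) ≤ (m:ℝ) - 1 := by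
    have := (ha i).2
    have : (a i : ℝ) ≤ ((m - 1 : ℕ) : ℝ) := by exact_mod_cast this
    rwa [Nat.cast_sub (by omega), Nat.cast_one] at this
  exact keyterm (m:ℝ) (a i : ℝ) (by exact_mod_cast hm) h1 h2
end
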